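/- Kreweras complementation is a lattice anti-isomorphism on NC(n): for noncrossing partitions P, Q of [n], P refines Q if and only if κ(Q) refines κ(P). -/

import Mathlib

/-- A partition of `{1,…,n}` (as `Fin n`) is noncrossing if there are no
`a < b < c < d` with `a, c` in one block and `b, d` in a different block. -/
def IsNoncrossing {n : ℕ} (P : Finpartition (Finset.univ : Finset (Fin n))) : Prop :=
  ¬ ∃ a b c d : Fin n, a < b ∧ b < c ∧ c < d ∧
    P.part a = P.part c ∧ P.part b = P.part d ∧ P.part a ≠ P.part b

/-- The set `NC(n)` of noncrossing partitions of `{1,…,n}`. -/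
abbrev NCP (n : ℕ) := {P : Finpartition (Finset.univ : Finset (Fin n)) // IsNoncrossing P}

/-- In the interleaved order `1 < 1' < 2 < 2' < … < n < n'` (element `i` of the
first copy sits at position `2i`, of the second copy at position `2i+1`),
positions `x` and `y` lie in the same block of the union `P ∪ Q`, where `P`
lives on the first copy and `Q` on the second. -/
def JointSame {n : ℕ} (P Q : Finpartition (Finset.univ : Finset (Fin n))) (x y : ℕ) : Prop :=
  ∃ i j : Fin n,
    (x = 2 * i.val ∧ y = 2 * j.val ∧ P.part i = P.part j) ∨
    (x = 2 * i.val + 1 ∧ y = 2 * j.val + 1 ∧ Q.part i = Q.part j)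

/-- `P ∪ Q` is a noncrossing partition of the interleaved totally ordered set. -/
def JointNoncrossing {n : ℕ} (P Q : Finpartition (Finset.univ : Finset (Fin n))) : Prop :=
  ¬ ∃ a b c d : ℕ, a < b ∧ b < c ∧ c < d ∧
    JointSame P Q a c ∧ JointSame P Q b d ∧ ¬ JointSame P Q a b

/-- `k` is the Kreweras complementation map on `NC(n)`: `k P` is the coarsest
noncrossing partition on the second copy of `{1,…,n}` such that `P ∪ k P` is
noncrossing on the interleaved set. -/
def IsKreweras {n : ℕ} (k : NCP n → NCP n) : Prop :=
  ∀ P : NCP n, JointNoncrossing P.1 (k P).1 ∧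
    ∀ Q : NCP n, JointNoncrossing P.1 Q.1 → Q.1 ≤ (k P).1

namespace KrewerasAux

variable {n : ℕ}

abbrev FP (n : ℕ) := Finpartition (Finset.univ : Finset (Fin n))

lemma part_le_trans {P Q : FP n} (h : P ≤ Q) {a b : Fin n}
    (hab : P.part a = P.part b) : Q.part a = Q.part b := by
  obtain ⟨t, ht, hsub⟩ := h (P.part_mem.2 (Finset.mem_univ a))
  have ha : a ∈ t := hsub (P.mem_part (Finset.mem_univ a))
  have hb : b ∈ t := hsub (hab ▸ P.mem_part (Finset.mem_univ b))
  rw [Q.part_eq_of_mem ht ha, Q.part_eq_of_mem ht hb]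

lemma le_of_part_imp {P Q : FP n}
    (h : ∀ a b : Fin n, P.part a = P.part b → Q.part a = Q.part b) : P ≤ Q := by
  intro t ht
  obtain ⟨x, -, hx⟩ := P.part_surjOn ht
  refine ⟨Q.part x, Q.part_mem.2 (Finset.mem_univ x), ?_⟩
  intro y hy
  rw [← hx] at hy
  have : P.part y = P.part x :=
    (P.mem_part_iff_part_eq_part (Finset.mem_univ y) (Finset.mem_univ x)).1 hy
  have := h y x this
  rw [← this]
  exact Q.mem_part (Finset.mem_univ y)

lemma noncross_same {P : FP n} (hP : IsNoncrossing P) {a b c d : Fin n}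
    (hab : a < b) (hbc : b < c) (hcd : c < d)
    (hac : P.part a = P.part c) (hbd : P.part b = P.part d) :
    P.part a = P.part b := by
  by_contra hne
  exact hP ⟨a, b, c, d, hab, hbc, hcd, hac, hbd, hne⟩

lemma not_jointSame_even_odd {P Q : FP n} {x y : ℕ}
    (hx : x % 2 = 0) (hy : y % 2 = 1) : ¬ JointSame P Q x y := by
  rintro ⟨i, j, ⟨h1, h2, -⟩ | ⟨h1, h2, -⟩⟩ <;> omega

lemma not_jointSame_odd_even {P Q : FP n} {x y : ℕ}
    (hx : x % 2 = 1) (hy : y % 2 = 0) : ¬ JointSame P Q x y := by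
  rintro ⟨i, j, ⟨h1, h2, -⟩ | ⟨h1, h2, -⟩⟩ <;> omega

lemma joint_mono {P P' Q Q' : FP n} (hP' : IsNoncrossing P') (hQ' : IsNoncrossing Q')
    (hPP : P' ≤ P) (hQQ : Q' ≤ Q) (h : JointNoncrossing P Q) :
    JointNoncrossing P' Q' := by
  rintro ⟨a, b, c, d, hab, hbc, hcd, hac, hbd, hnab⟩
  rcases hac with ⟨i1, i2, ⟨rfl, rfl, hi⟩ | ⟨rfl, rfl, hi⟩⟩ <;>
    rcases hbd with ⟨k1, k2, ⟨hb', hd', hkk⟩ | ⟨hb', hd', hkk⟩⟩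
  · -- even even : crossing inside P'
    subst hb' hd'
    have h1 : i1 < k1 := by rw [Fin.lt_def]; omega
    have h2 : k1 < i2 := by rw [Fin.lt_def]; omega
    have h3 : i2 < k2 := by rw [Fin.lt_def]; omega
    exact hnab ⟨i1, k1, Or.inl ⟨rfl, rfl, noncross_same hP' h1 h2 h3 hi hkk⟩⟩
  · -- even / odd : genuine crossing transfers to (P, Q)
    subst hb' hd'
    exact h ⟨_, _, _, _, hab, hbc, hcd,
      ⟨i1, i2, Or.inl ⟨rfl, rfl, part_le_trans hPP hi⟩⟩,
      ⟨k1, k2, Or.inr ⟨rfl, rfl, part_le_trans hQQ hkk⟩⟩,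
      not_jointSame_even_odd (by omega) (by omega)⟩
  · -- odd / even
    subst hb' hd'
    exact h ⟨_, _, _, _, hab, hbc, hcd,
      ⟨i1, i2, Or.inr ⟨rfl, rfl, part_le_trans hQQ hi⟩⟩,
      ⟨k1, k2, Or.inl ⟨rfl, rfl, part_le_trans hPP hkk⟩⟩,
      not_jointSame_odd_even (by omega) (by omega)⟩
  · -- odd odd : crossing inside Q'
    subst hb' hd'
    have h1 : i1 < k1 := by rw [Fin.lt_def]; omega
    have h2 : k1 < i2 := by rw [Fin.lt_def]; omega
    have h3 : i2 < k2 := by rw [Fin.lt_def]; omega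
    exact hnab ⟨i1, k1, Or.inr ⟨rfl, rfl, noncross_same hQ' h1 h2 h3 hi hkk⟩⟩

/-- Gaps `a` and `b` lie on the same side of every arc of `Q`. -/
def GapRel (Q : FP n) (a b : Fin n) : Prop :=
  ∀ u v : Fin n, u < v → Q.part u = Q.part v → ((u ≤ a ∧ a < v) ↔ (u ≤ b ∧ b < v))

lemma gapRel_refl (Q : FP n) (a : Fin n) : GapRel Q a a := fun _ _ _ _ => Iff.rfl

lemma gapRel_symm {Q : FP n} {a b : Fin n} (h : GapRel Q a b) : GapRel Q b a :=
  fun u v huv hq => (h u v huv hq).symm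

lemma gapRel_trans {Q : FP n} {a b c : Fin n} (h1 : GapRel Q a b) (h2 : GapRel Q b c) :
    GapRel Q a c := fun u v huv hq => (h1 u v huv hq).trans (h2 u v huv hq)

/-- The key noncrossing property of `GapRel`. -/
lemma gapRel_cross {Q : FP n} {a b c d : Fin n} (hab : a < b) (hbc : b < c) (hcd : c < d)
    (hac : GapRel Q a c) (hbd : GapRel Q b d) : GapRel Q a b := by
  intro u v huv hq
  have h1 := hac u v huv hq
  have h2 := hbd u v huv hq
  simp only [Fin.le_def, Fin.lt_def] at h1 h2 hab hbc hcd ⊢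
  omega

def gapSetoid (Q : FP n) : Setoid (Fin n) :=
  ⟨GapRel Q, gapRel_refl Q, gapRel_symm, gapRel_trans⟩

open Classical in
/-- The finpartition of gaps into faces. -/
noncomputable def Rstar (Q : FP n) : FP n :=
  Finpartition.ofSetoid (gapSetoid Q)

open Classical in
lemma Rstar_part_iff {Q : FP n} {a b : Fin n} :
    (Rstar Q).part a = (Rstar Q).part b ↔ GapRel Q a b := by
  constructor
  · intro h
    have hb : b ∈ (Rstar Q).part b := (Rstar Q).mem_part (Finset.mem_univ b)
    rw [← h] at hb
    exact Finpartition.mem_part_ofSetoid_iff_rel.1 hb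
  · intro h
    have hb : b ∈ (Rstar Q).part a := Finpartition.mem_part_ofSetoid_iff_rel.2 h
    exact (((Rstar Q).mem_part_iff_part_eq_part (Finset.mem_univ b)
      (Finset.mem_univ a)).1 hb).symm

lemma Rstar_noncrossing (Q : FP n) : IsNoncrossing (Rstar Q) := by
  rintro ⟨a, b, c, d, hab, hbc, hcd, hac, hbd, hnab⟩
  rw [Rstar_part_iff] at hac hbd
  exact hnab (Rstar_part_iff.2 (gapRel_cross hab hbc hcd hac hbd))

lemma Rstar_joint {Q : FP n} (hQ : IsNoncrossing Q) : JointNoncrossing Q (Rstar Q) := by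
  rintro ⟨a, b, c, d, hab, hbc, hcd, hac, hbd, hnab⟩
  rcases hac with ⟨i1, i2, ⟨rfl, rfl, hi⟩ | ⟨rfl, rfl, hi⟩⟩ <;>
    rcases hbd with ⟨k1, k2, ⟨hb', hd', hkk⟩ | ⟨hb', hd', hkk⟩⟩
  · subst hb' hd'
    have h1 : i1 < k1 := by rw [Fin.lt_def]; omega
    have h2 : k1 < i2 := by rw [Fin.lt_def]; omega
    have h3 : i2 < k2 := by rw [Fin.lt_def]; omega
    exact hnab ⟨i1, k1, Or.inl ⟨rfl, rfl, noncross_same hQ h1 h2 h3 hi hkk⟩⟩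
  · -- Q-arc (i1,i2), gap pair (k1,k2) with i1 ≤ k1 < i2 ≤ k2 : separated
    subst hb' hd'
    rw [Rstar_part_iff] at hkk
    have hi1 : i1 < i2 := by rw [Fin.lt_def]; omega
    have := hkk i1 i2 hi1 hi
    simp only [Fin.le_def, Fin.lt_def] at this
    omega
  · -- gap pair (i1,i2), Q-arc (k1,k2) with i1 < k1 ≤ i2 < k2 : separated
    subst hb' hd'
    rw [Rstar_part_iff] at hi
    have hk1 : k1 < k2 := by rw [Fin.lt_def]; omega
    have := hi k1 k2 hk1 hkk
    simp only [Fin.le_def, Fin.lt_def] at this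
    omega
  · subst hb' hd'
    rw [Rstar_part_iff] at hi hkk
    have h1 : i1 < k1 := by rw [Fin.lt_def]; omega
    have h2 : k1 < i2 := by rw [Fin.lt_def]; omega
    have h3 : i2 < k2 := by rw [Fin.lt_def]; omega
    exact hnab ⟨i1, k1, Or.inr ⟨rfl, rfl, Rstar_part_iff.2 (gapRel_cross h1 h2 h3 hi hkk)⟩⟩

lemma claim2 {Q : FP n} (hQ : IsNoncrossing Q) :
    ∀ d : ℕ, ∀ i j : Fin n, j.val - i.val = d → i < j →
      (∀ a b : Fin n, i ≤ a → a < j → ¬(i ≤ b ∧ b < j) → ¬ GapRel Q a b) →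
      Q.part i = Q.part j := by
  intro d
  induction d using Nat.strong_induction_on with
  | _ d IH =>
  intro i j hd hij H
  rw [Fin.lt_def] at hij
  have hjn : j.val - 1 < n := by omega
  have hsep := H ⟨j.val - 1, by omega⟩ j
    (by rw [Fin.le_def]; simp; omega)
    (by rw [Fin.lt_def]; simp; omega)
    (by rw [Fin.le_def, Fin.lt_def]; omega)
  rw [GapRel] at hsep; push_neg at hsep
  obtain ⟨u, v, huv, hQuv, hiff⟩ := hsep
  rw [Fin.lt_def] at huv
  simp only [Fin.le_def, Fin.lt_def] at hiff
  have hdich : (v.val = j.val ∧ u.val < j.val) ∨ (u.val = j.val ∧ j.val < v.val) := by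
    omega
  by_cases hC1 : ∃ w : Fin n, w < j ∧ Q.part w = Q.part j
  · -- Case C1 : block of j has an element < j
    classical
    obtain ⟨w0, hw0lt, hw0⟩ := hC1
    set S : Finset (Fin n) := Finset.univ.filter fun w => w < j ∧ Q.part w = Q.part j with hS
    have hSne : S.Nonempty := ⟨w0, by simp [hS, hw0lt, hw0]⟩
    set m : Fin n := S.max' hSne with hm
    have hmmem : m < j ∧ Q.part m = Q.part j :=
      (Finset.mem_filter.1 (S.max'_mem hSne)).2
    have hmax : ∀ w : Fin n, w < j → Q.part w = Q.part j → w ≤ m := by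
      intro w h1 h2
      exact S.le_max' w (by simp [hS, h1, h2])
    rcases lt_trichotomy m.val i.val with hlt | heq | hgt
    · -- m < i : derive a contradiction
      exfalso
      have hsep2 := H i m (le_refl i) (by rw [Fin.lt_def]; omega)
        (by rw [Fin.le_def]; omega)
      rw [GapRel] at hsep2; push_neg at hsep2
      obtain ⟨p, q, hpq, hQpq, hiff2⟩ := hsep2
      rw [Fin.lt_def] at hpq
      simp only [Fin.le_def, Fin.lt_def] at hiff2
      have hcases : (m.val < p.val ∧ p.val ≤ i.val ∧ i.val < q.val) ∨
          (p.val ≤ m.val ∧ m.val < q.val ∧ q.val ≤ i.val) := by omega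
      rcases hcases with ⟨h1, h2, h3⟩ | ⟨h1, h2, h3⟩
      · -- m < p ≤ i < q
        by_cases hpj : Q.part p = Q.part j
        · have := hmax p (by rw [Fin.lt_def]; omega) hpj
          rw [Fin.le_def] at this; omega
        · rcases lt_trichotomy q.val j.val with hq | hq | hq
          · -- i < q < j : induction on (q, j)
            have hQqj : Q.part q = Q.part j := by
              refine IH (j.val - q.val) (by omega) q j rfl (by rw [Fin.lt_def]; omega) ?_
              intro a b ha1 ha2 hb
              rw [Fin.le_def] at ha1
              rw [Fin.lt_def] at ha2
              simp only [Fin.le_def, Fin.lt_def] at hb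
              by_cases hbmid : i.val ≤ b.val ∧ b.val < q.val
              · intro hg
                have := hg p q (by rw [Fin.lt_def]; omega) hQpq
                simp only [Fin.le_def, Fin.lt_def] at this
                omega
              · exact H a b (by rw [Fin.le_def]; omega) (by rw [Fin.lt_def]; omega)
                  (by simp only [Fin.le_def, Fin.lt_def]; omega)
            exact hpj (hQpq.trans hQqj)
          · -- q = j
            have : q = j := Fin.ext hq
            exact hpj (this ▸ hQpq)
          · -- q > j : crossing (m, p, j, q)
            have := noncross_same hQ (a := m) (b := p) (c := j) (d := q)
              (by rw [Fin.lt_def]; omega) (by rw [Fin.lt_def]; omega)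
              (by rw [Fin.lt_def]; omega) hmmem.2 hQpq
            exact hpj (this.symm.trans hmmem.2)
      · -- p ≤ m < q ≤ i
        by_cases hpj : Q.part p = Q.part j
        · have hqj : Q.part q = Q.part j := hQpq.symm.trans hpj
          have := hmax q (by rw [Fin.lt_def]; omega) hqj
          rw [Fin.le_def] at this; omega
        · by_cases hpm : p.val = m.val
          · exact hpj ((Fin.ext hpm : p = m) ▸ hmmem.2)
          · -- p < m < q < j : crossing (p, m, q, j)
            have := noncross_same hQ (a := p) (b := m) (c := q) (d := j)
              (by rw [Fin.lt_def]; omega) (by rw [Fin.lt_def]; omega)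
              (by rw [Fin.lt_def]; omega) hQpq hmmem.2
            exact hpj (this.trans hmmem.2)
    · -- m = i
      have : m = i := Fin.ext heq
      exact this ▸ hmmem.2
    · -- i < m < j : induction on (i, m)
      have hQim : Q.part i = Q.part m := by
        refine IH (m.val - i.val) (by omega) i m rfl (by rw [Fin.lt_def]; omega) ?_
        intro a b ha1 ha2 hb
        rw [Fin.le_def] at ha1
        rw [Fin.lt_def] at ha2
        simp only [Fin.le_def, Fin.lt_def] at hb
        by_cases hbmid : m.val ≤ b.val ∧ b.val < j.val
        · intro hg
          have := hg m j (by rw [Fin.lt_def]; exact hmmem.1) hmmem.2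
          simp only [Fin.le_def, Fin.lt_def] at this
          rw [Fin.lt_def] at hmmem
          omega
        · exact H a b (by rw [Fin.le_def]; omega)
            (by rw [Fin.lt_def]; have := hmmem.1; rw [Fin.lt_def] at this; omega)
            (by simp only [Fin.le_def, Fin.lt_def]; omega)
      exact hQim.trans hmmem.2
  · -- Case C2 : block of j has no element < j
    classical
    have hEx : ∃ w : Fin n, j.val < w.val ∧ Q.part w = Q.part j := by
      rcases hdich with ⟨h1, h2⟩ | ⟨h1, h2⟩
      · exact absurd ⟨u, by rw [Fin.lt_def]; omega, (Fin.ext h1 : v = j) ▸ hQuv⟩ hC1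
      · exact ⟨v, by omega, ((Fin.ext h1 : u = j) ▸ hQuv).symm⟩
    obtain ⟨w1, hw1lt, hw1⟩ := hEx
    set T : Finset (Fin n) := Finset.univ.filter fun w => Q.part w = Q.part j with hT
    have hTne : T.Nonempty := ⟨w1, by simp [hT, hw1]⟩
    set M : Fin n := T.max' hTne with hM
    have hMeq : Q.part M = Q.part j :=
      (Finset.mem_filter.1 (T.max'_mem hTne)).2
    have hmaxM : ∀ w : Fin n, Q.part w = Q.part j → w ≤ M := by
      intro w h2
      exact T.le_max' w (by simp [hT, h2])
    have hjM : j.val < M.val := by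
      have := hmaxM w1 hw1
      rw [Fin.le_def] at this; omega
    have hsep3 := H ⟨j.val - 1, by omega⟩ M
      (by rw [Fin.le_def]; simp; omega)
      (by rw [Fin.lt_def]; simp; omega)
      (by rw [Fin.le_def, Fin.lt_def]; omega)
    rw [GapRel] at hsep3; push_neg at hsep3
    obtain ⟨p, q, hpq, hQpq, hiff3⟩ := hsep3
    rw [Fin.lt_def] at hpq
    simp only [Fin.le_def, Fin.lt_def] at hiff3
    have hcases : (p.val < j.val ∧ j.val ≤ q.val ∧ q.val ≤ M.val) ∨
        (j.val ≤ p.val ∧ p.val ≤ M.val ∧ M.val < q.val) := by omega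
    rcases hcases with ⟨h1, h2, h3⟩ | ⟨h1, h2, h3⟩
    · -- p < j ≤ q ≤ M
      by_cases hpj : Q.part p = Q.part j
      · exact absurd ⟨p, by rw [Fin.lt_def]; omega, hpj⟩ hC1
      · by_cases hqj : Q.part q = Q.part j
        · exact (hpj (hQpq.trans hqj)).elim
        · -- j < q < M : crossing (p, j, q, M)
          exfalso
          have hqj' : q.val ≠ j.val := fun h => hqj ((Fin.ext h : q = j) ▸ rfl)
          have hqM : q.val ≠ M.val := fun h => hqj ((Fin.ext h : q = M) ▸ hMeq)
          have := noncross_same hQ (a := p) (b := j) (c := q) (d := M)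
            (by rw [Fin.lt_def]; omega) (by rw [Fin.lt_def]; omega)
            (by rw [Fin.lt_def]; omega) hQpq hMeq.symm
          exact hpj this
    · -- j ≤ p ≤ M < q
      by_cases hpj : Q.part p = Q.part j
      · have hqj : Q.part q = Q.part j := hQpq.symm.trans hpj
        have := hmaxM q hqj
        rw [Fin.le_def] at this; omega
      · exfalso
        have hpj' : p.val ≠ j.val := fun h => hpj ((Fin.ext h : p = j) ▸ rfl)
        have hpM : p.val ≠ M.val := fun h => hpj ((Fin.ext h : p = M) ▸ hMeq)
        have := noncross_same hQ (a := j) (b := p) (c := M) (d := q)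
          (by rw [Fin.lt_def]; omega) (by rw [Fin.lt_def]; omega)
          (by rw [Fin.lt_def]; omega) hMeq.symm hQpq
        exact hpj this.symm

end KrewerasAux

open KrewerasAux

/-- Kreweras complementation is a lattice anti-isomorphism on `NC(n)`:
`P` refines `Q` iff `κ(Q)` refines `κ(P)`. -/
theorem kreweras_anti_isomorphism (n : ℕ) (k : NCP n → NCP n)
    (hk : IsKreweras k) (P Q : NCP n) :
    P.1 ≤ Q.1 ↔ (k Q).1 ≤ (k P).1 := by
  constructor
  · intro hPQ
    exact (hk P).2 (k Q) (joint_mono P.2 (k Q).2 hPQ le_rfl (hk Q).1)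
  · intro hkk
    have hPkQ : JointNoncrossing P.1 (k Q).1 :=
      joint_mono P.2 (k Q).2 le_rfl hkk (hk P).1
    have hRle : Rstar Q.1 ≤ (k Q).1 :=
      (hk Q).2 ⟨Rstar Q.1, Rstar_noncrossing Q.1⟩ (Rstar_joint Q.2)
    have key : ∀ i j : Fin n, i < j → P.1.part i = P.1.part j →
        Q.1.part i = Q.1.part j := by
      intro i j hij hPij
      rw [Fin.lt_def] at hij
      refine claim2 Q.2 (j.val - i.val) i j rfl (by rw [Fin.lt_def]; omega) ?_
      intro a b ha1 ha2 hb hg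
      have hkQab : (k Q).1.part a = (k Q).1.part b :=
        part_le_trans hRle (Rstar_part_iff.2 hg)
      rw [Fin.le_def] at ha1
      rw [Fin.lt_def] at ha2
      simp only [Fin.le_def, Fin.lt_def] at hb
      rcases (by omega : b.val < i.val ∨ j.val ≤ b.val) with hbv | hbv
      · -- positions 2b+1 < 2i < 2a+1 < 2j
        exact hPkQ ⟨2 * b.val + 1, 2 * i.val, 2 * a.val + 1, 2 * j.val,
          by omega, by omega, by omega,
          ⟨b, a, Or.inr ⟨rfl, rfl, hkQab.symm⟩⟩,
          ⟨i, j, Or.inl ⟨rfl, rfl, hPij⟩⟩,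
          not_jointSame_odd_even (by omega) (by omega)⟩
      · -- positions 2i < 2a+1 < 2j < 2b+1
        exact hPkQ ⟨2 * i.val, 2 * a.val + 1, 2 * j.val, 2 * b.val + 1,
          by omega, by omega, by omega,
          ⟨i, j, Or.inl ⟨rfl, rfl, hPij⟩⟩,
          ⟨a, b, Or.inr ⟨rfl, rfl, hkQab⟩⟩,
          not_jointSame_even_odd (by omega) (by omega)⟩
    refine le_of_part_imp ?_
    intro a b hab
    rcases lt_trichotomy a.val b.val with h | h | h
    · exact key a b (by rw [Fin.lt_def]; omega) hab
    · rw [(Fin.ext h : a = b)]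
    · exact (key b a (by rw [Fin.lt_def]; omega) hab.symm).symm
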